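/- Let P : ℝ² → Matrix (Fin N) (Fin N) ℂ be twice continuously differentiable with P² = P at every point, and let λ ∈ ℂ with λ ∉ {0, 1, −1}. Define U¹ = (2/(1+λ))[∂₊P, P] and U² = (2/(1−λ))[∂₋P, P]. Then at every point the zero-curvature condition ∂₋U¹ − ∂₊U² + [U¹, U²] = 0 holds if and only if the Euler–Lagrange equation [∂₊∂₋P, P] = 0 holds. -/

import Mathlib

open Matrix

noncomputable section

attribute [local instance] Matrix.normedAddCommGroup Matrix.normedSpace

/-- The Wirtinger derivative `∂₊ = ½(∂/∂x − i ∂/∂y)` of a matrix-valued map on `ℝ²`. -/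
def dp {N : ℕ} (P : ℝ × ℝ → Matrix (Fin N) (Fin N) ℂ) (p : ℝ × ℝ) :
    Matrix (Fin N) (Fin N) ℂ :=
  (2 : ℂ)⁻¹ • (fderiv ℝ P p (1, 0) - Complex.I • fderiv ℝ P p (0, 1))

/-- The Wirtinger derivative `∂₋ = ½(∂/∂x + i ∂/∂y)` of a matrix-valued map on `ℝ²`. -/
def dm {N : ℕ} (P : ℝ × ℝ → Matrix (Fin N) (Fin N) ℂ) (p : ℝ × ℝ) :
    Matrix (Fin N) (Fin N) ℂ :=
  (2 : ℂ)⁻¹ • (fderiv ℝ P p (1, 0) + Complex.I • fderiv ℝ P p (0, 1))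


variable {N : ℕ}
abbrev MM (N : ℕ) := Matrix (Fin N) (Fin N) ℂ

instance instTopMM : TopologicalSpace (MM N) :=
  (Matrix.normedAddCommGroup : NormedAddCommGroup (MM N)).toPseudoMetricSpace.toUniformSpace.toTopologicalSpace
def mulCLM (N : ℕ) : MM N →L[ℝ] MM N →L[ℝ] MM N :=
  LinearMap.toContinuousLinearMap
    { toFun := fun A => LinearMap.toContinuousLinearMap (LinearMap.mulLeft ℝ A)
      map_add' := by intro a b; ext x; simp [Matrix.add_mul]
      map_smul' := by intro c a; ext x; simp [Matrix.smul_mul] }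

@[simp] lemma mulCLM_apply (A B : MM N) : mulCLM N A B = A * B := rfl

lemma fderiv_mul_mat {F G : ℝ × ℝ → MM N} {p : ℝ × ℝ}
    (hF : DifferentiableAt ℝ F p) (hG : DifferentiableAt ℝ G p) (v : ℝ × ℝ) :
    fderiv ℝ (fun q => F q * G q) p v
      = fderiv ℝ F p v * G p + F p * fderiv ℝ G p v := by
  have h1 : HasFDerivAt (fun q => mulCLM N (F q)) ((mulCLM N).comp (fderiv ℝ F p)) p :=
    ((mulCLM N).hasFDerivAt (x := F p)).comp p hF.hasFDerivAt
  have h2 := h1.clm_apply hG.hasFDerivAt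
  have := h2.fderiv
  simp only [mulCLM_apply] at this
  rw [this]
  simp [add_comm]

section
variable {P : ℝ × ℝ → MM N} (hP : ContDiff ℝ 2 P) {p : ℝ × ℝ}

example : ContDiff ℝ 1 (fderiv ℝ P) := hP.fderiv_right (m := 1) (by norm_num)

lemma contDiff_dp (hP : ContDiff ℝ 2 P) : ContDiff ℝ 1 (dp P) := by
  have h := hP.fderiv_right (m := 1) (by norm_num)
  have h1 : ContDiff ℝ 1 fun q => fderiv ℝ P q (1, 0) := h.clm_apply contDiff_const
  have h2 : ContDiff ℝ 1 fun q => fderiv ℝ P q (0, 1) := h.clm_apply contDiff_const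
  exact (h1.sub (h2.const_smul Complex.I)).const_smul ((2:ℂ)⁻¹)

lemma contDiff_dm (hP : ContDiff ℝ 2 P) : ContDiff ℝ 1 (dm P) := by
  have h := hP.fderiv_right (m := 1) (by norm_num)
  have h1 : ContDiff ℝ 1 fun q => fderiv ℝ P q (1, 0) := h.clm_apply contDiff_const
  have h2 : ContDiff ℝ 1 fun q => fderiv ℝ P q (0, 1) := h.clm_apply contDiff_const
  exact (h1.add (h2.const_smul Complex.I)).const_smul ((2:ℂ)⁻¹)

-- fderiv of clm-apply at constant vector
lemma fderiv_fderiv_apply (hP : ContDiff ℝ 2 P) (v w : ℝ × ℝ) :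
    fderiv ℝ (fun q => fderiv ℝ P q v) p w = fderiv ℝ (fderiv ℝ P) p w v := by
  have h : DifferentiableAt ℝ (fderiv ℝ P) p :=
    (hP.fderiv_right (m := 1) (by norm_num)).differentiable one_ne_zero p
  have := (h.hasFDerivAt.clm_apply (hasFDerivAt_const v p)).fderiv
  rw [this]; simp
end

section
variable {P : ℝ × ℝ → MM N} {p : ℝ × ℝ}

lemma fderiv_dp (hP : ContDiff ℝ 2 P) (w : ℝ × ℝ) :
    fderiv ℝ (dp P) p w = (2:ℂ)⁻¹ • (fderiv ℝ (fderiv ℝ P) p w (1, 0)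
      - Complex.I • fderiv ℝ (fderiv ℝ P) p w (0, 1)) := by
  have h := hP.fderiv_right (m := 1) (by norm_num)
  have h1 : DifferentiableAt ℝ (fun q => fderiv ℝ P q (1, 0)) p :=
    (h.clm_apply contDiff_const).differentiable one_ne_zero p
  have h2 : DifferentiableAt ℝ (fun q => fderiv ℝ P q (0, 1)) p :=
    (h.clm_apply contDiff_const).differentiable one_ne_zero p
  have : dp P = fun q => (2:ℂ)⁻¹ • ((fun q => fderiv ℝ P q (1, 0)) q
      - Complex.I • (fun q => fderiv ℝ P q (0, 1)) q) := rfl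
  rw [this, fderiv_fun_const_smul (by exact (h1.fun_sub (h2.fun_const_smul Complex.I))),
    fderiv_fun_sub h1 (h2.fun_const_smul Complex.I), fderiv_fun_const_smul h2]
  simp [fderiv_fderiv_apply hP]

lemma fderiv_dm (hP : ContDiff ℝ 2 P) (w : ℝ × ℝ) :
    fderiv ℝ (dm P) p w = (2:ℂ)⁻¹ • (fderiv ℝ (fderiv ℝ P) p w (1, 0)
      + Complex.I • fderiv ℝ (fderiv ℝ P) p w (0, 1)) := by
  have h := hP.fderiv_right (m := 1) (by norm_num)
  have h1 : DifferentiableAt ℝ (fun q => fderiv ℝ P q (1, 0)) p :=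
    (h.clm_apply contDiff_const).differentiable one_ne_zero p
  have h2 : DifferentiableAt ℝ (fun q => fderiv ℝ P q (0, 1)) p :=
    (h.clm_apply contDiff_const).differentiable one_ne_zero p
  have : dm P = fun q => (2:ℂ)⁻¹ • ((fun q => fderiv ℝ P q (1, 0)) q
      + Complex.I • (fun q => fderiv ℝ P q (0, 1)) q) := rfl
  rw [this, fderiv_fun_const_smul (by exact (h1.fun_add (h2.fun_const_smul Complex.I))),
    fderiv_fun_add h1 (h2.fun_const_smul Complex.I), fderiv_fun_const_smul h2]
  simp [fderiv_fderiv_apply hP]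

lemma dm_dp_eq_dp_dm (hP : ContDiff ℝ 2 P) :
    dm (dp P) p = dp (dm P) p := by
  have hsymm : IsSymmSndFDerivAt ℝ P p :=
    (hP.contDiffAt).isSymmSndFDerivAt (by norm_num)
  have e12 := hsymm (1, 0) (0, 1)
  simp only [dm, dp]
  erw [fderiv_dp hP, fderiv_dp hP, fderiv_dm hP, fderiv_dm hP]
  rw [e12]
  module
end
section
variable {N : ℕ}

lemma smul_comb_rel (Q X Y : MM N) (c d : ℂ) (hX : X*Q + Q*X = X) (hY : Y*Q + Q*Y = Y) :
    (c • (X + d • Y)) * Q + Q * (c • (X + d • Y)) = c • (X + d • Y) := by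
  have h1 : X*Q = X - Q*X := eq_sub_of_add_eq hX
  have h2 : Y*Q = Y - Q*Y := eq_sub_of_add_eq hY
  rw [smul_mul_assoc, mul_smul_comm, add_mul, mul_add, smul_mul_assoc, mul_smul_comm, h1, h2]
  module

lemma key_comm (Q A B : MM N) (hQ : Q*Q = Q) (hA : A*Q + Q*A = A) (hB : B*Q + Q*B = B) :
    (A*Q - Q*A) * (B*Q - Q*B) - (B*Q - Q*B) * (A*Q - Q*A) = -(A*B - B*A) := by
  have hQA : Q*A = A - A*Q := eq_sub_of_add_eq' hA
  have hQB : Q*B = B - B*Q := eq_sub_of_add_eq' hB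
  have r1 : ∀ X : MM N, Q * (Q * X) = Q * X := fun X => by rw [← mul_assoc, hQ]
  have r2 : ∀ X : MM N, Q * (A * X) = A * X - A * (Q * X) := fun X => by
    rw [← mul_assoc, hQA, sub_mul, mul_assoc]
  have r3 : ∀ X : MM N, Q * (B * X) = B * X - B * (Q * X) := fun X => by
    rw [← mul_assoc, hQB, sub_mul, mul_assoc]
  simp only [mul_sub, sub_mul, mul_assoc, r1, r2, r3, hQA, hQB, hQ, mul_sub, sub_mul]
  abel
end
section
variable {N : ℕ}

lemma diffAt_mul {F G : ℝ × ℝ → MM N} {p : ℝ × ℝ}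
    (hF : DifferentiableAt ℝ F p) (hG : DifferentiableAt ℝ G p) :
    DifferentiableAt ℝ (fun q => F q * G q) p := by
  have h1 : HasFDerivAt (fun q => mulCLM N (F q)) ((mulCLM N).comp (fderiv ℝ F p)) p :=
    ((mulCLM N).hasFDerivAt (x := F p)).comp p hF.hasFDerivAt
  exact (h1.clm_apply hG.hasFDerivAt).differentiableAt

theorem zero_curvature_iff_EL' {N : ℕ} (P : ℝ × ℝ → Matrix (Fin N) (Fin N) ℂ)
    (hP : ContDiff ℝ 2 P) (hproj : ∀ p, P p * P p = P p)
    (lam : ℂ) (h0 : lam ≠ 0) (h1 : lam ≠ 1) (h2 : lam ≠ -1)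
    (U1 U2 : ℝ × ℝ → Matrix (Fin N) (Fin N) ℂ)
    (hU1 : U1 = fun p => (2 / (1 + lam)) • (dp P p * P p - P p * dp P p))
    (hU2 : U2 = fun p => (2 / (1 - lam)) • (dm P p * P p - P p * dm P p)) :
    ∀ p, (dm U1 p - dp U2 p + (U1 p * U2 p - U2 p * U1 p) = 0
      ↔ dp (fun q => dm P q) p * P p - P p * dp (fun q => dm P q) p = 0) := by
  intro p
  have hlp : (1 : ℂ) + lam ≠ 0 := fun h => h2 (by linear_combination h)
  have hlm : (1 : ℂ) - lam ≠ 0 := fun h => h1 (by linear_combination -h)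
  set a : ℂ := 2 / (1 + lam) with ha
  set b : ℂ := 2 / (1 - lam) with hb
  have hPd : ∀ q, DifferentiableAt ℝ P q := fun q => hP.differentiable two_ne_zero q
  have hdpd : ∀ q, DifferentiableAt ℝ (dp P) q := fun q =>
    (contDiff_dp hP).differentiable one_ne_zero q
  have hdmd : ∀ q, DifferentiableAt ℝ (dm P) q := fun q =>
    (contDiff_dm hP).differentiable one_ne_zero q
  set Q : MM N := P p with hQdef
  set X1 : MM N := fderiv ℝ P p (1, 0) with hX1def
  set X2 : MM N := fderiv ℝ P p (0, 1) with hX2def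
  set A : MM N := dp P p with hAdef
  set B : MM N := dm P p with hBdef
  -- projector derivative relations
  have hXrel : ∀ v, fderiv ℝ P p v * Q + Q * fderiv ℝ P p v = fderiv ℝ P p v := by
    intro v
    have hPP : (fun q => P q * P q) = P := funext hproj
    have e1 : fderiv ℝ (fun q => P q * P q) p v = fderiv ℝ P p v := by rw [hPP]
    rw [fderiv_mul_mat (hPd p) (hPd p)] at e1
    exact e1
  have hQQ : Q * Q = Q := hproj p
  have hAQ : A * Q + Q * A = A := by
    have := smul_comb_rel Q X1 X2 ((2:ℂ)⁻¹) (-Complex.I) (hXrel (1,0)) (hXrel (0,1))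
    rw [hAdef]
    show dp P p * Q + Q * dp P p = dp P p
    rw [dp, sub_eq_add_neg, ← neg_smul]
    exact this
  have hBQ : B * Q + Q * B = B := by
    have := smul_comb_rel Q X1 X2 ((2:ℂ)⁻¹) Complex.I (hXrel (1,0)) (hXrel (0,1))
    rw [hBdef]
    show dm P p * Q + Q * dm P p = dm P p
    rw [dm]
    exact this
  -- derivative of U1 in any direction
  have hfU1 : ∀ w, fderiv ℝ U1 p w = a • ((fderiv ℝ (dp P) p w * Q + A * fderiv ℝ P p w)
      - (fderiv ℝ P p w * A + Q * fderiv ℝ (dp P) p w)) := by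
    intro w
    rw [hU1]
    have d1 : DifferentiableAt ℝ (fun q => dp P q * P q) p := diffAt_mul (hdpd p) (hPd p)
    have d2 : DifferentiableAt ℝ (fun q => P q * dp P q) p := diffAt_mul (hPd p) (hdpd p)
    rw [fderiv_fun_const_smul (d1.fun_sub d2) a]
    simp only [ContinuousLinearMap.smul_apply]
    rw [fderiv_fun_sub d1 d2]
    simp only [ContinuousLinearMap.sub_apply]
    rw [fderiv_mul_mat (hdpd p) (hPd p) w, fderiv_mul_mat (hPd p) (hdpd p) w]
  have hfU2 : ∀ w, fderiv ℝ U2 p w = b • ((fderiv ℝ (dm P) p w * Q + B * fderiv ℝ P p w)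
      - (fderiv ℝ P p w * B + Q * fderiv ℝ (dm P) p w)) := by
    intro w
    rw [hU2]
    have d1 : DifferentiableAt ℝ (fun q => dm P q * P q) p := diffAt_mul (hdmd p) (hPd p)
    have d2 : DifferentiableAt ℝ (fun q => P q * dm P q) p := diffAt_mul (hPd p) (hdmd p)
    rw [fderiv_fun_const_smul (d1.fun_sub d2) b]
    simp only [ContinuousLinearMap.smul_apply]
    rw [fderiv_fun_sub d1 d2]
    simp only [ContinuousLinearMap.sub_apply]
    rw [fderiv_mul_mat (hdmd p) (hPd p) w, fderiv_mul_mat (hPd p) (hdmd p) w]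
  set S : MM N := dp (fun q => dm P q) p with hSdef
  have hS1 : dm (dp P) p = S := dm_dp_eq_dp_dm hP
  -- E1
  have E1 : dm U1 p = a • ((S * Q - Q * S) + (A * B - B * A)) := by
    rw [dm]; erw [hfU1 (1,0), hfU1 (0,1)]
    rw [← hS1]
    have hBexp : B = (2:ℂ)⁻¹ • (X1 + Complex.I • X2) := rfl
    have hSexp : dm (dp P) p = (2:ℂ)⁻¹ • (fderiv ℝ (dp P) p (1,0)
        + Complex.I • fderiv ℝ (dp P) p (0,1)) := rfl
    rw [hBexp, hSexp]
    simp only [smul_mul_assoc, mul_smul_comm, add_mul, mul_add]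
    module
  have E2 : dp U2 p = b • ((S * Q - Q * S) + (B * A - A * B)) := by
    rw [dp]; erw [hfU2 (1,0), hfU2 (0,1)]
    have hAexp : A = (2:ℂ)⁻¹ • (X1 - Complex.I • X2) := rfl
    have hSexp : S = (2:ℂ)⁻¹ • (fderiv ℝ (dm P) p (1,0)
        - Complex.I • fderiv ℝ (dm P) p (0,1)) := rfl
    rw [hAexp, hSexp]
    simp only [smul_mul_assoc, mul_smul_comm, add_mul, mul_add, sub_mul, mul_sub]
    module
  have E3 : U1 p * U2 p - U2 p * U1 p = (a * b) • (-(A * B - B * A)) := by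
    have u1 : U1 p = a • (A * Q - Q * A) := by rw [hU1]
    have u2 : U2 p = b • (B * Q - Q * B) := by rw [hU2]
    rw [u1, u2, smul_mul_assoc, mul_smul_comm, smul_mul_assoc, mul_smul_comm,
      smul_smul, smul_smul, mul_comm b a, ← smul_sub, ← key_comm Q A B hQQ hAQ hBQ]
  have hab : a * b = a + b := by
    rw [ha, hb]; field_simp; ring
  have habne : a - b ≠ 0 := by
    rw [ha, hb]
    rw [div_sub_div _ _ hlp hlm, div_ne_zero_iff]
    constructor
    · intro h; apply h0; linear_combination -h / 4
    · exact mul_ne_zero hlp hlm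
  have main : dm U1 p - dp U2 p + (U1 p * U2 p - U2 p * U1 p)
      = (a - b) • (S * Q - Q * S) := by
    rw [E1, E2, E3, hab]
    module
  rw [main]
  constructor
  · intro h
    rcases smul_eq_zero.mp h with h | h
    · exact absurd h habne
    · exact h
  · intro h; rw [h, smul_zero]
end

/-- For an idempotent-valued `C²` map `P` and `λ ∉ {0, 1, −1}`, with
`U¹ = (2/(1+λ))[∂₊P, P]` and `U² = (2/(1−λ))[∂₋P, P]`, the zero-curvature condition
`∂₋U¹ − ∂₊U² + [U¹, U²] = 0` holds at a point iff the Euler–Lagrange equation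
`[∂₊∂₋P, P] = 0` holds there. -/
theorem zero_curvature_iff_EL {N : ℕ} (P : ℝ × ℝ → Matrix (Fin N) (Fin N) ℂ)
    (hP : ContDiff ℝ 2 P) (hproj : ∀ p, P p * P p = P p)
    (lam : ℂ) (h0 : lam ≠ 0) (h1 : lam ≠ 1) (h2 : lam ≠ -1)
    (U1 U2 : ℝ × ℝ → Matrix (Fin N) (Fin N) ℂ)
    (hU1 : U1 = fun p => (2 / (1 + lam)) • (dp P p * P p - P p * dp P p))
    (hU2 : U2 = fun p => (2 / (1 - lam)) • (dm P p * P p - P p * dm P p)) :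
    ∀ p, (dm U1 p - dp U2 p + (U1 p * U2 p - U2 p * U1 p) = 0
      ↔ dp (fun q => dm P q) p * P p - P p * dp (fun q => dm P q) p = 0) :=
  zero_curvature_iff_EL' P hP hproj lam h0 h1 h2 U1 U2 hU1 hU2
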